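/- Let K be an algebraically closed field of characteristic zero, and let 1 ≤ a ≤ b be integers. If N ⊆ Matrix_{b×a}(K) is a 1-generic linear subspace, then dim_K N ≥ a + b − 1. -/

import Mathlib

open Module

namespace Statement2Aux

set_option linter.unusedSectionVars false

open MvPolynomial Finsupp

variable {K : Type*} [Field K] {σ : Type*} [Fintype σ]

/-- Multiplying by a weighted-homogeneous polynomial of weight `k` shifts
weighted homogeneous components by `k`. -/
theorem wHC_mul_homog (w : σ → ℕ) {g : MvPolynomial σ K} {k : ℕ}
    (hg : g.IsWeightedHomogeneous w k) (h : MvPolynomial σ K) (n : ℕ) :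
    weightedHomogeneousComponent w (n + k) (g * h)
      = g * weightedHomogeneousComponent w n h := by
  classical
  have hfin := weightedHomogeneousComponent_finsupp (w := w) h
  have hh : h = ∑ d ∈ hfin.toFinset, weightedHomogeneousComponent w d h := by
    rw [← finsum_eq_sum _ hfin, sum_weightedHomogeneousComponent]
  calc weightedHomogeneousComponent w (n + k) (g * h)
      = weightedHomogeneousComponent w (n + k)
          (∑ d ∈ hfin.toFinset, g * weightedHomogeneousComponent w d h) := by
        rw [← Finset.mul_sum, ← hh]
    _ = ∑ d ∈ hfin.toFinset,
          weightedHomogeneousComponent w (n + k) (g * weightedHomogeneousComponent w d h) :=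
        map_sum _ _ _
    _ = ∑ d ∈ hfin.toFinset,
          (if d = n then g * weightedHomogeneousComponent w d h else 0) := by
        refine Finset.sum_congr rfl fun d _ => ?_
        have hhom : IsWeightedHomogeneous w (g * weightedHomogeneousComponent w d h) (k + d) :=
          hg.mul (weightedHomogeneousComponent_isWeightedHomogeneous d h)
        by_cases hd : d = n
        · subst hd
          rw [if_pos rfl, add_comm]
          exact hhom.weightedHomogeneousComponent_same
        · rw [if_neg hd]
          exact hhom.weightedHomogeneousComponent_ne _ (by omega)
    _ = g * weightedHomogeneousComponent w n h := by
        rw [Finset.sum_ite_eq' hfin.toFinset n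
          (fun d => g * weightedHomogeneousComponent w d h)]
        split_ifs with hmem
        · rfl
        · have : weightedHomogeneousComponent w n h = 0 := by
            by_contra hne
            exact hmem (hfin.mem_toFinset.mpr hne)
          rw [this, mul_zero]

/-- Taking a weighted homogeneous component w.r.t. one weight preserves
weighted homogeneity w.r.t. another weight. -/
theorem wHC_preserve (w w' : σ → ℕ) {p : MvPolynomial σ K} {n' : ℕ}
    (hp : p.IsWeightedHomogeneous w' n') (e : ℕ) :
    (weightedHomogeneousComponent w e p).IsWeightedHomogeneous w' n' := by
  classical
  intro d hd
  rw [coeff_weightedHomogeneousComponent] at hd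
  split_ifs at hd with hw
  · exact hp hd
  · exact absurd rfl hd

theorem pow_isWeightedHomogeneous (w : σ → ℕ) {p : MvPolynomial σ K} {k : ℕ}
    (hp : p.IsWeightedHomogeneous w k) (n : ℕ) :
    (p ^ n).IsWeightedHomogeneous w (n * k) := by
  induction n with
  | zero => simpa using isWeightedHomogeneous_one K w
  | succ n ih =>
      have := ih.mul hp
      rw [← pow_succ] at this
      convert this using 1
      ring

/-- A bihomogeneous polynomial lies in the span of the "balanced" monomials. -/
theorem mem_span_balanced (wx wy : σ → ℕ) (e e' : ℕ) {p : MvPolynomial σ K}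
    (h1 : p.IsWeightedHomogeneous wx e) (h2 : p.IsWeightedHomogeneous wy e') :
    p ∈ Submodule.span K ((fun μ : σ →₀ ℕ => (monomial μ (1 : K))) ''
      {μ | weight wx μ = e ∧ weight wy μ = e'}) := by
  rw [as_sum p]
  refine Submodule.sum_mem _ fun v hv => ?_
  have hmono : (monomial v (coeff v p) : MvPolynomial σ K) = (coeff v p) • monomial v 1 := by
    rw [smul_monomial, smul_eq_mul, mul_one]
  rw [hmono]
  exact Submodule.smul_mem _ _ (Submodule.subset_span
    ⟨v, ⟨h1 (MvPolynomial.mem_support_iff.mp hv), h2 (MvPolynomial.mem_support_iff.mp hv)⟩, rfl⟩)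

/-- Multiplication by a balanced monomial maps balanced spans to balanced spans. -/
theorem span_balanced_mul (wx wy : σ → ℕ) (r r' s s' : ℕ) {p : MvPolynomial σ K}
    (hp : p ∈ Submodule.span K ((fun μ : σ →₀ ℕ => (monomial μ (1 : K))) ''
      {μ | weight wx μ = r ∧ weight wy μ = r'}))
    {ν : σ →₀ ℕ} (hν : weight wx ν = s ∧ weight wy ν = s') :
    p * monomial ν 1 ∈ Submodule.span K ((fun μ : σ →₀ ℕ => (monomial μ (1 : K))) ''
      {μ | weight wx μ = r + s ∧ weight wy μ = r' + s'}) := by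
  induction hp using Submodule.span_induction with
  | mem x hx =>
      obtain ⟨μ, ⟨hμ1, hμ2⟩, rfl⟩ := hx
      have : (monomial μ (1 : K)) * monomial ν 1 = monomial (μ + ν) 1 := by
        rw [monomial_mul, one_mul]
      rw [this]
      exact Submodule.subset_span ⟨μ + ν, ⟨by rw [map_add, hμ1, hν.1],
        by rw [map_add, hμ2, hν.2]⟩, rfl⟩
  | zero => rw [zero_mul]; exact Submodule.zero_mem _
  | add x y _ _ hx hy => rw [add_mul]; exact Submodule.add_mem _ hx hy
  | smul c x _ hx => rw [smul_mul_assoc]; exact Submodule.smul_mem _ _ hx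

end Statement2Aux

open Statement2Aux MvPolynomial Finsupp

set_option maxHeartbeats 1000000

/-- A `1`-generic linear subspace `N` of `b×a` matrices (with `1 ≤ a ≤ b`)
over an algebraically closed field of characteristic zero has dimension at least
`a + b - 1`. Here `N` is `k`-generic means: the only `ψ ∈ Matrix_{a×b}(K)` with
`rank ψ ≤ k` and `tr(φψ) = 0` for all `φ ∈ N` is `ψ = 0`. -/
theorem statement2 {K : Type*} [Field K] [IsAlgClosed K] [CharZero K]
    (a b : ℕ) (ha : 1 ≤ a) (hab : a ≤ b)
    (N : Submodule K (Matrix (Fin b) (Fin a) K))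
    (hgen : ∀ ψ : Matrix (Fin a) (Fin b) K, ψ.rank ≤ 1 →
      (∀ φ ∈ N, Matrix.trace (φ * ψ) = 0) → ψ = 0) :
    a + b - 1 ≤ Module.finrank K N := by
  classical
  by_contra hcon
  push_neg at hcon
  obtain ⟨a', rfl⟩ : ∃ a', a = a' + 1 := ⟨a - 1, by omega⟩
  obtain ⟨b', rfl⟩ : ∃ b', b = b' + 1 := ⟨b - 1, by omega⟩
  set m := Module.finrank K N with hmdef
  have hm2 : m ≤ a' + b' := by omega
  set φ : Basis (Fin m) K N := Module.finBasis K N with hφdef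
  -- the bilinear forms associated to a basis of N
  set g : Fin m → MvPolynomial (Fin (a' + 1) ⊕ Fin (b' + 1)) K := fun i =>
    ∑ j : Fin (b' + 1), ∑ k : Fin (a' + 1),
      C ((φ i : Matrix (Fin (b' + 1)) (Fin (a' + 1)) K) j k)
        * (X (Sum.inl k) * X (Sum.inr j)) with hgdef
  set wx : (Fin (a' + 1) ⊕ Fin (b' + 1)) → ℕ := Sum.elim (fun _ => 1) (fun _ => 0) with hwxdef
  set wy : (Fin (a' + 1) ⊕ Fin (b' + 1)) → ℕ := Sum.elim (fun _ => 0) (fun _ => 1) with hwydef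
  have hwx : ∀ μ : (Fin (a' + 1) ⊕ Fin (b' + 1)) →₀ ℕ,
      weight wx μ = ∑ k : Fin (a' + 1), μ (Sum.inl k) := by
    intro μ
    rw [weight_apply, Finsupp.sum_fintype _ _ (fun s => by simp)]
    rw [Fintype.sum_sum_type]
    simp [hwxdef]
  have hwy : ∀ μ : (Fin (a' + 1) ⊕ Fin (b' + 1)) →₀ ℕ,
      weight wy μ = ∑ j : Fin (b' + 1), μ (Sum.inr j) := by
    intro μ
    rw [weight_apply, Finsupp.sum_fintype _ _ (fun s => by simp)]
    rw [Fintype.sum_sum_type]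
    simp [hwydef]
  have hgwx : ∀ i, (g i).IsWeightedHomogeneous wx 1 := by
    intro i
    refine IsWeightedHomogeneous.sum _ _ _ fun j _ => ?_
    refine IsWeightedHomogeneous.sum _ _ _ fun k _ => ?_
    exact (isWeightedHomogeneous_C wx _).mul
      ((isWeightedHomogeneous_X K wx (Sum.inl k)).mul (isWeightedHomogeneous_X K wx (Sum.inr j)))
  have hgwy : ∀ i, (g i).IsWeightedHomogeneous wy 1 := by
    intro i
    refine IsWeightedHomogeneous.sum _ _ _ fun j _ => ?_
    refine IsWeightedHomogeneous.sum _ _ _ fun k _ => ?_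
    exact (isWeightedHomogeneous_C wy _).mul
      ((isWeightedHomogeneous_X K wy (Sum.inl k)).mul (isWeightedHomogeneous_X K wy (Sum.inr j)))
  -- Step 1 : Nullstellensatz
  have hrad : ∀ (s : Fin (a' + 1)) (t : Fin (b' + 1)), ∃ n : ℕ,
      (X (Sum.inl s) * X (Sum.inr t) : MvPolynomial (Fin (a' + 1) ⊕ Fin (b' + 1)) K) ^ (n + 1)
        ∈ Ideal.span (Set.range g) := by
    intro s t
    have hv : (X (Sum.inl s) * X (Sum.inr t) : MvPolynomial (Fin (a' + 1) ⊕ Fin (b' + 1)) K)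
        ∈ MvPolynomial.vanishingIdeal K (MvPolynomial.zeroLocus K (Ideal.span (Set.range g))) := by
      rw [mem_vanishingIdeal_iff]
      intro z hz
      rw [map_mul, aeval_X, aeval_X]
      by_contra hne
      have hus : z (Sum.inl s) ≠ 0 := fun h => hne (by rw [h, zero_mul])
      have hvt : z (Sum.inr t) ≠ 0 := fun h => hne (by rw [h, mul_zero])
      set ψ := Matrix.vecMulVec (z ∘ Sum.inl) (z ∘ Sum.inr) with hψdef
      have hψrank : ψ.rank ≤ 1 := by
        rw [hψdef, Matrix.vecMulVec_eq (Fin 1)]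
        exact le_trans (Matrix.rank_mul_le_left _ _)
          (le_trans (Matrix.rank_le_card_width _) (by simp))
      have hψtr : ∀ φ' ∈ N, Matrix.trace (φ' * ψ) = 0 := by
        intro φ' hφ'
        have hzero : ∀ i, Matrix.trace ((φ i : Matrix (Fin (b' + 1)) (Fin (a' + 1)) K) * ψ) = 0 := by
          intro i
          have hev : eval z (g i) = 0 := hz (g i) (Ideal.subset_span ⟨i, rfl⟩)
          have : Matrix.trace ((φ i : Matrix (Fin (b' + 1)) (Fin (a' + 1)) K) * ψ)
              = eval z (g i) := by
            simp [hgdef, Matrix.trace, Matrix.diag, Matrix.mul_apply, hψdef,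
              Matrix.vecMulVec_apply, mul_assoc]
          rw [this, hev]
        -- expand φ' in the basis
        have hrepr := φ.sum_repr ⟨φ', hφ'⟩
        have hval := congrArg (fun x : N => (x : Matrix (Fin (b' + 1)) (Fin (a' + 1)) K)) hrepr
        simp only at hval
        calc Matrix.trace (φ' * ψ)
            = Matrix.trace (((∑ i, φ.repr ⟨φ', hφ'⟩ i • φ i : N) : Matrix (Fin (b' + 1)) (Fin (a' + 1)) K) * ψ) := by
              rw [hval]
          _ = ∑ i, φ.repr ⟨φ', hφ'⟩ i • Matrix.trace ((φ i : Matrix (Fin (b' + 1)) (Fin (a' + 1)) K) * ψ) := by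
              push_cast
              rw [Matrix.sum_mul, Matrix.trace_sum]
              refine Finset.sum_congr rfl fun i _ => ?_
              rw [Matrix.smul_mul, Matrix.trace_smul]
          _ = 0 := by
              simp [hzero]
      have hψ0 := hgen ψ hψrank hψtr
      have : ψ s t = 0 := by rw [hψ0]; rfl
      rw [hψdef, Matrix.vecMulVec_apply] at this
      exact hne this
    rw [MvPolynomial.vanishingIdeal_zeroLocus_eq_radical] at hv
    obtain ⟨n, hn⟩ := hv
    refine ⟨n, ?_⟩
    rw [pow_succ]
    exact Ideal.mul_mem_right _ _ hn
  choose nf hnf using hrad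
  set N₀ : ℕ := 1 + ∑ s, ∑ t, nf s t with hN₀def
  have hN₀pos : 1 ≤ N₀ := by omega
  have hN₀ : ∀ s t,
      (X (Sum.inl s) * X (Sum.inr t) : MvPolynomial (Fin (a' + 1) ⊕ Fin (b' + 1)) K) ^ N₀
        ∈ Ideal.span (Set.range g) := by
    intro s t
    have hle : nf s t + 1 ≤ N₀ := by
      have h1 : nf s t ≤ ∑ t', nf s t' := Finset.single_le_sum (fun _ _ => Nat.zero_le _)
        (Finset.mem_univ t)
      have h2 : (∑ t', nf s t') ≤ ∑ s', ∑ t', nf s' t' :=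
        Finset.single_le_sum (f := fun s' => ∑ t', nf s' t') (fun _ _ => Nat.zero_le _)
          (Finset.mem_univ s)
      omega
    have heq : (X (Sum.inl s) * X (Sum.inr t) : MvPolynomial (Fin (a' + 1) ⊕ Fin (b' + 1)) K) ^ N₀
        = (X (Sum.inl s) * X (Sum.inr t)) ^ (N₀ - (nf s t + 1))
          * (X (Sum.inl s) * X (Sum.inr t)) ^ (nf s t + 1) := by
      rw [← pow_add]
      congr 1
      omega
    rw [heq]
    exact Ideal.mul_mem_left _ _ (hnf s t)
  set D : ℕ := (a' + b' + 2) * N₀ with hDdef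
  have hD1 : 1 ≤ D := Nat.mul_pos (by omega) hN₀pos
  -- balanced spans
  set V : ℕ → Submodule K (MvPolynomial (Fin (a' + 1) ⊕ Fin (b' + 1)) K) := fun e =>
    Submodule.span K ((fun μ : (Fin (a' + 1) ⊕ Fin (b' + 1)) →₀ ℕ => (monomial μ (1 : K))) ''
      {μ | weight wx μ = e ∧ weight wy μ = e}) with hVdef
  set F : (e : ℕ) → ((Fin m → Fin (e + 1)) × ((Fin (a' + 1) ⊕ Fin (b' + 1)) → Fin D)) →
      MvPolynomial (Fin (a' + 1) ⊕ Fin (b' + 1)) K := fun e p =>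
    (∏ i, g i ^ (p.1 i : ℕ))
      * monomial (Finsupp.equivFunOnFinite.symm (fun s => ((p.2 s : ℕ)))) 1 with hFdef
  set T : ℕ → Submodule K (MvPolynomial (Fin (a' + 1) ⊕ Fin (b' + 1)) K) := fun e =>
    Submodule.span K (Set.range (F e)) with hTdef
  have hTmono : ∀ {e e' : ℕ}, e ≤ e' → T e ≤ T e' := by
    intro e e' h
    apply Submodule.span_mono
    rintro _ ⟨⟨γ, μ⟩, rfl⟩
    exact ⟨⟨fun i => Fin.castLE (by omega) (γ i), μ⟩, by simp [hFdef]⟩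
  have hgT : ∀ (i : Fin m) (e : ℕ), ∀ q ∈ T e, g i * q ∈ T (e + 1) := by
    intro i e q hq
    have hmap : Submodule.map (LinearMap.mulLeft K (g i)) (T e) ≤ T (e + 1) := by
      rw [hTdef, Submodule.map_span, Submodule.span_le]
      rintro _ ⟨_, ⟨⟨γ, μ⟩, rfl⟩, rfl⟩
      refine Submodule.subset_span
        ⟨⟨fun j => ⟨(γ j : ℕ) + (if j = i then 1 else 0), by
          have := (γ j).isLt; split <;> omega⟩, μ⟩, ?_⟩
      show (∏ j, g j ^ ((⟨(γ j : ℕ) + (if j = i then 1 else 0), _⟩ : Fin (e + 2)) : ℕ))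
          * monomial _ 1 = LinearMap.mulLeft K (g i) (F e (γ, μ))
      simp only [LinearMap.mulLeft_apply, hFdef]
      rw [← mul_assoc]
      congr 1
      calc (∏ j, g j ^ ((γ j : ℕ) + (if j = i then 1 else 0)))
          = ∏ j, (g j ^ (γ j : ℕ)) * (if j = i then g j else 1) := by
            refine Finset.prod_congr rfl fun j _ => ?_
            rw [pow_add]
            congr 1
            split_ifs <;> simp
        _ = (∏ j, g j ^ (γ j : ℕ)) * ∏ j, (if j = i then g j else 1) := Finset.prod_mul_distrib
        _ = g i * ∏ j, g j ^ (γ j : ℕ) := by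
            rw [Finset.prod_ite_eq' Finset.univ i (fun j => g j)]
            simp only [Finset.mem_univ, if_true]
            rw [mul_comm]
    exact hmap ⟨q, hq, rfl⟩
  -- main induction : balanced spans are controlled by T
  have hVT : ∀ e : ℕ, V e ≤ T e := by
    intro e
    induction e using Nat.strong_induction_on with
    | _ e IH =>
    rw [hVdef, Submodule.span_le]
    rintro _ ⟨μ, ⟨hμx, hμy⟩, rfl⟩
    by_cases he : e < D
    · -- small degree : it is one of the generators
      have hbound : ∀ s, μ s < D := by
        intro s
        rcases s with k | j
        · have h1 : μ (Sum.inl k) ≤ ∑ k', μ (Sum.inl k') :=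
            Finset.single_le_sum (f := fun k' => μ (Sum.inl k'))
              (fun _ _ => Nat.zero_le _) (Finset.mem_univ k)
          rw [← hwx μ] at h1
          omega
        · have h1 : μ (Sum.inr j) ≤ ∑ j', μ (Sum.inr j') :=
            Finset.single_le_sum (f := fun j' => μ (Sum.inr j'))
              (fun _ _ => Nat.zero_le _) (Finset.mem_univ j)
          rw [← hwy μ] at h1
          omega
      refine Submodule.subset_span ⟨⟨fun _ => 0, fun s => ⟨μ s, hbound s⟩⟩, ?_⟩
      simp only [hFdef, Fin.val_zero, pow_zero, Finset.prod_const_one, one_mul]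
      congr 1
      have : (fun s => (((⟨μ s, hbound s⟩ : Fin D)) : ℕ)) = ⇑μ := rfl
      rw [this, Finsupp.equivFunOnFinite_symm_coe]
    · -- large degree : use the radical membership
      push_neg at he
      obtain ⟨e₁, rfl⟩ : ∃ e₁, e = e₁ + 1 := ⟨e - 1, by omega⟩
      have hk : ∃ k₀, N₀ ≤ μ (Sum.inl k₀) := by
        by_contra hno
        push_neg at hno
        have hsum : (∑ k, μ (Sum.inl k)) ≤ (a' + 1) * (N₀ - 1) := by
          calc (∑ k, μ (Sum.inl k)) ≤ ∑ _k : Fin (a' + 1), (N₀ - 1) :=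
              Finset.sum_le_sum (fun k _ => by have := hno k; omega)
            _ = (a' + 1) * (N₀ - 1) := by simp [Finset.sum_const, mul_comm]
        rw [← hwx μ, hμx] at hsum
        have h1 : (a' + 1) * (N₀ - 1) ≤ (a' + b' + 2) * (N₀ - 1) :=
          mul_le_mul_left (by omega) _
        have h2 : (a' + b' + 2) * (N₀ - 1) < (a' + b' + 2) * N₀ :=
          mul_lt_mul_of_pos_left (by omega) (by omega)
        omega
      have hj : ∃ j₀, N₀ ≤ μ (Sum.inr j₀) := by
        by_contra hno
        push_neg at hno
        have hsum : (∑ j, μ (Sum.inr j)) ≤ (b' + 1) * (N₀ - 1) := by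
          calc (∑ j, μ (Sum.inr j)) ≤ ∑ _j : Fin (b' + 1), (N₀ - 1) :=
              Finset.sum_le_sum (fun j _ => by have := hno j; omega)
            _ = (b' + 1) * (N₀ - 1) := by simp [Finset.sum_const, mul_comm]
        rw [← hwy μ, hμy] at hsum
        have h1 : (b' + 1) * (N₀ - 1) ≤ (a' + b' + 2) * (N₀ - 1) :=
          mul_le_mul_left (by omega) _
        have h2 : (a' + b' + 2) * (N₀ - 1) < (a' + b' + 2) * N₀ :=
          mul_lt_mul_of_pos_left (by omega) (by omega)
        omega
      obtain ⟨k₀, hk₀⟩ := hk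
      obtain ⟨j₀, hj₀⟩ := hj
      set ν : (Fin (a' + 1) ⊕ Fin (b' + 1)) →₀ ℕ :=
        Finsupp.single (Sum.inl k₀) N₀ + Finsupp.single (Sum.inr j₀) N₀ with hνdef
      have hq : (X (Sum.inl k₀) * X (Sum.inr j₀) :
          MvPolynomial (Fin (a' + 1) ⊕ Fin (b' + 1)) K) ^ N₀ = monomial ν 1 := by
        rw [mul_pow, X_pow_eq_monomial, X_pow_eq_monomial, monomial_mul, one_mul, hνdef]
      set μ'' := μ - ν with hμ''def
      have hνapp : ∀ s, ν s = (if s = Sum.inl k₀ then N₀ else 0)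
          + (if s = Sum.inr j₀ then N₀ else 0) := by
        intro s
        rw [hνdef]
        rw [Finsupp.add_apply, Finsupp.single_apply, Finsupp.single_apply]
        congr 1 <;> congr 1 <;> exact propext eq_comm
      have hνs : ∀ s, ν s ≤ μ s := by
        intro s
        rw [hνapp]
        by_cases h1 : s = Sum.inl k₀
        · subst h1
          rw [if_pos rfl, if_neg (by simp)]
          omega
        · rw [if_neg h1]
          by_cases h2 : s = Sum.inr j₀
          · subst h2
            rw [if_pos rfl]
            omega
          · rw [if_neg h2]
            omega
      have hμsplit : μ = ν + μ'' := by
        ext s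
        have := hνs s
        rw [Finsupp.add_apply, hμ''def, Finsupp.tsub_apply]
        omega
      have hνinl : ∀ k, ν (Sum.inl k) = if k = k₀ then N₀ else 0 := by
        intro k
        rw [hνapp]
        rcases eq_or_ne k k₀ with h | h
        · subst h; simp
        · simp [h]
      have hνinr : ∀ j, ν (Sum.inr j) = if j = j₀ then N₀ else 0 := by
        intro j
        rw [hνapp]
        rcases eq_or_ne j j₀ with h | h
        · subst h; simp
        · simp [h]
      have hνx : weight wx ν = N₀ := by
        rw [hwx]
        rw [Finset.sum_congr rfl (fun k _ => hνinl k), Finset.sum_ite_eq' Finset.univ k₀]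
        simp
      have hνy : weight wy ν = N₀ := by
        rw [hwy]
        rw [Finset.sum_congr rfl (fun j _ => hνinr j), Finset.sum_ite_eq' Finset.univ j₀]
        simp
      have hμ''x : weight wx μ'' = e₁ + 1 - N₀ := by
        have := congrArg (weight wx) hμsplit
        rw [map_add, hμx, hνx] at this
        omega
      have hμ''y : weight wy μ'' = e₁ + 1 - N₀ := by
        have := congrArg (weight wy) hμsplit
        rw [map_add, hμy, hνy] at this
        omega
      -- representation with balanced coefficients
      obtain ⟨c, hc⟩ := (Submodule.mem_span_range_iff_exists_fun _).mp
        (by exact hN₀ k₀ j₀ : (X (Sum.inl k₀) * X (Sum.inr j₀) :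
          MvPolynomial (Fin (a' + 1) ⊕ Fin (b' + 1)) K) ^ N₀ ∈
            Submodule.span (MvPolynomial (Fin (a' + 1) ⊕ Fin (b' + 1)) K) (Set.range g))
      -- make the coefficients balanced using homogeneous components
      set c' : Fin m → MvPolynomial (Fin (a' + 1) ⊕ Fin (b' + 1)) K := fun i =>
        weightedHomogeneousComponent wx (N₀ - 1)
          (weightedHomogeneousComponent wy (N₀ - 1) (c i)) with hc'def
      have hqx : ((X (Sum.inl k₀) * X (Sum.inr j₀) :
          MvPolynomial (Fin (a' + 1) ⊕ Fin (b' + 1)) K) ^ N₀).IsWeightedHomogeneous wx N₀ := by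
        have := pow_isWeightedHomogeneous wx
          ((isWeightedHomogeneous_X K wx (Sum.inl k₀)).mul
            (isWeightedHomogeneous_X K wx (Sum.inr j₀))) N₀
        convert this using 2
        simp [hwxdef]
      have hqy : ((X (Sum.inl k₀) * X (Sum.inr j₀) :
          MvPolynomial (Fin (a' + 1) ⊕ Fin (b' + 1)) K) ^ N₀).IsWeightedHomogeneous wy N₀ := by
        have := pow_isWeightedHomogeneous wy
          ((isWeightedHomogeneous_X K wy (Sum.inl k₀)).mul
            (isWeightedHomogeneous_X K wy (Sum.inr j₀))) N₀
        convert this using 2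
        simp [hwydef]
      have hrep : (X (Sum.inl k₀) * X (Sum.inr j₀) :
          MvPolynomial (Fin (a' + 1) ⊕ Fin (b' + 1)) K) ^ N₀ = ∑ i, g i * c' i := by
        conv_lhs => rw [← hqx.weightedHomogeneousComponent_same,
          ← hqy.weightedHomogeneousComponent_same, ← hc]
        rw [map_sum, map_sum]
        refine Finset.sum_congr rfl fun i _ => ?_
        have e1 : c i • g i = g i * c i := by rw [smul_eq_mul, mul_comm]
        rw [e1]
        have e2 : weightedHomogeneousComponent wy N₀ (g i * c i)
            = g i * weightedHomogeneousComponent wy (N₀ - 1) (c i) := by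
          have := wHC_mul_homog wy (hgwy i) (c i) (N₀ - 1)
          have hN : N₀ - 1 + 1 = N₀ := by omega
          rw [hN] at this
          exact this
        rw [e2]
        have e3 : weightedHomogeneousComponent wx N₀
              (g i * weightedHomogeneousComponent wy (N₀ - 1) (c i))
            = g i * c' i := by
          have := wHC_mul_homog wx (hgwx i) (weightedHomogeneousComponent wy (N₀ - 1) (c i))
            (N₀ - 1)
          have hN : N₀ - 1 + 1 = N₀ := by omega
          rw [hN] at this
          rw [this, hc'def]
        rw [e3]
      have hc'V : ∀ i, c' i ∈ V (N₀ - 1) := by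
        intro i
        rw [hVdef]
        exact mem_span_balanced wx wy (N₀ - 1) (N₀ - 1)
          (weightedHomogeneousComponent_isWeightedHomogeneous _ _)
          (wHC_preserve wx wy (weightedHomogeneousComponent_isWeightedHomogeneous _ _) _)
      -- assemble
      have hmono_eq : (monomial μ (1 : K) : MvPolynomial (Fin (a' + 1) ⊕ Fin (b' + 1)) K)
          = ∑ i, g i * (c' i * monomial μ'' 1) := by
        have h1 : (monomial μ (1 : K) : MvPolynomial (Fin (a' + 1) ⊕ Fin (b' + 1)) K)
            = (X (Sum.inl k₀) * X (Sum.inr j₀)) ^ N₀ * monomial μ'' 1 := by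
          rw [hq, monomial_mul, one_mul, ← hμsplit]
        rw [h1, hrep, Finset.sum_mul]
        refine Finset.sum_congr rfl fun i _ => ?_
        rw [mul_assoc]
      show (monomial μ (1 : K) : MvPolynomial (Fin (a' + 1) ⊕ Fin (b' + 1)) K) ∈ T (e₁ + 1)
      rw [hmono_eq]
      refine Submodule.sum_mem _ fun i _ => ?_
      apply hgT i e₁
      have hmem : c' i * monomial μ'' 1 ∈ V ((N₀ - 1) + (e₁ + 1 - N₀)) := by
        rw [hVdef]
        exact span_balanced_mul wx wy (N₀ - 1) (N₀ - 1) (e₁ + 1 - N₀) (e₁ + 1 - N₀)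
          (by have h := hc'V i; rw [hVdef] at h; exact h) ⟨hμ''x, hμ''y⟩
      have hND : N₀ ≤ D := by
        calc N₀ = 1 * N₀ := (one_mul _).symm
          _ ≤ (a' + b' + 2) * N₀ := mul_le_mul_left (by omega) _
          _ = D := by rw [hDdef]
      have heq : (N₀ - 1) + (e₁ + 1 - N₀) = e₁ := by omega
      rw [heq] at hmem
      exact IH e₁ (by omega) hmem
  -- the counting argument
  set t : ℕ := D ^ (a' + b' + 2) * (a' + b' + 1) ^ (a' + b') with htdef
  set d : ℕ := (a' + b' + 1) * t with hddef
  set μP : ((Fin a' → Fin (t + 1)) × (Fin b' → Fin (t + 1)) × Fin (t + 1)) →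
      ((Fin (a' + 1) ⊕ Fin (b' + 1)) →₀ ℕ) := fun x =>
    Finsupp.equivFunOnFinite.symm (Sum.elim
      (Fin.cons ((x.2.2 : ℕ) + ∑ j, (x.2.1 j : ℕ)) (fun k => (x.1 k : ℕ)))
      (Fin.cons ((x.2.2 : ℕ) + ∑ k, (x.1 k : ℕ)) (fun j => (x.2.1 j : ℕ)))) with hμPdef
  have happ : ∀ x s, μP x s = Sum.elim
      (Fin.cons ((x.2.2 : ℕ) + ∑ j, (x.2.1 j : ℕ)) (fun k => (x.1 k : ℕ)))
      (Fin.cons ((x.2.2 : ℕ) + ∑ k, (x.1 k : ℕ)) (fun j => (x.2.1 j : ℕ))) s := by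
    intro x s
    rw [hμPdef]
    rfl
  have hinj : Function.Injective μP := by
    intro x y hxy
    have h' : ∀ s, μP x s = μP y s := fun s => by rw [hxy]
    obtain ⟨p1, q1, r1⟩ := x
    obtain ⟨p2, q2, r2⟩ := y
    simp only [happ, Sum.elim_inl, Sum.elim_inr] at h'
    have hp : p1 = p2 := by
      funext k
      have hk := h' (Sum.inl k.succ)
      simp only [happ, Sum.elim_inl, Fin.cons_succ] at hk
      exact Fin.val_injective hk
    have hq : q1 = q2 := by
      funext j
      have hj := h' (Sum.inr j.succ)
      simp only [happ, Sum.elim_inr, Fin.cons_succ] at hj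
      exact Fin.val_injective hj
    have hr : r1 = r2 := by
      have h0 := h' (Sum.inl 0)
      simp only [Sum.elim_inl, Fin.cons_zero] at h0
      subst hq
      apply Fin.val_injective
      omega
    subst hp
    subst hq
    subst hr
    rfl
  have hbalx : ∀ x, weight wx (μP x)
      = (x.2.2 : ℕ) + (∑ j, (x.2.1 j : ℕ)) + ∑ k, (x.1 k : ℕ) := by
    intro x
    rw [hwx]
    rw [Finset.sum_congr rfl (fun k _ => happ x (Sum.inl k))]
    simp only [Sum.elim_inl]
    rw [Fin.sum_univ_succ]
    simp only [Fin.cons_zero, Fin.cons_succ]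
  have hbaly : ∀ x, weight wy (μP x)
      = (x.2.2 : ℕ) + (∑ j, (x.2.1 j : ℕ)) + ∑ k, (x.1 k : ℕ) := by
    intro x
    rw [hwy]
    rw [Finset.sum_congr rfl (fun j _ => happ x (Sum.inr j))]
    simp only [Sum.elim_inr]
    rw [Fin.sum_univ_succ]
    simp only [Fin.cons_zero, Fin.cons_succ]
    ring
  have hmemT : ∀ x, (monomial (μP x) (1 : K) :
      MvPolynomial (Fin (a' + 1) ⊕ Fin (b' + 1)) K) ∈ T d := by
    intro x
    have hle : (x.2.2 : ℕ) + (∑ j, (x.2.1 j : ℕ)) + (∑ k, (x.1 k : ℕ)) ≤ d := by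
      have h1 : (x.2.2 : ℕ) ≤ t := Fin.is_le _
      have h2 : (∑ j, (x.2.1 j : ℕ)) ≤ b' * t := by
        calc (∑ j, (x.2.1 j : ℕ)) ≤ ∑ _j : Fin b', t :=
            Finset.sum_le_sum (fun j _ => Fin.is_le _)
          _ = b' * t := by simp [Finset.sum_const, mul_comm]
      have h3 : (∑ k, (x.1 k : ℕ)) ≤ a' * t := by
        calc (∑ k, (x.1 k : ℕ)) ≤ ∑ _k : Fin a', t :=
            Finset.sum_le_sum (fun k _ => Fin.is_le _)
          _ = a' * t := by simp [Finset.sum_const, mul_comm]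
      calc (x.2.2 : ℕ) + (∑ j, (x.2.1 j : ℕ)) + (∑ k, (x.1 k : ℕ))
          ≤ t + b' * t + a' * t := by omega
        _ = (a' + b' + 1) * t := by ring
        _ = d := hddef.symm
    have hV : (monomial (μP x) (1 : K) : MvPolynomial (Fin (a' + 1) ⊕ Fin (b' + 1)) K)
        ∈ V ((x.2.2 : ℕ) + (∑ j, (x.2.1 j : ℕ)) + ∑ k, (x.1 k : ℕ)) := by
      rw [hVdef]
      exact Submodule.subset_span ⟨μP x, ⟨hbalx x, hbaly x⟩, rfl⟩
    exact hTmono hle (hVT _ hV)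
  have hLI : LinearIndependent K (fun x : ((Fin a' → Fin (t + 1)) × (Fin b' → Fin (t + 1))
      × Fin (t + 1)) => (monomial (μP x) (1 : K) :
        MvPolynomial (Fin (a' + 1) ⊕ Fin (b' + 1)) K)) := by
    have hb := (MvPolynomial.basisMonomials (Fin (a' + 1) ⊕ Fin (b' + 1)) K).linearIndependent
    have hcomp := hb.comp μP hinj
    exact hcomp
  haveI hfd : FiniteDimensional K (T d) := by
    rw [hTdef]
    exact FiniteDimensional.span_of_finite K (Set.finite_range (F d))
  have hlow : (t + 1) ^ (a' + b' + 1) ≤ finrank K (T d) := by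
    have hcard : Fintype.card ((Fin a' → Fin (t + 1)) × (Fin b' → Fin (t + 1)) × Fin (t + 1))
        = (t + 1) ^ (a' + b' + 1) := by
      simp only [Fintype.card_prod, Fintype.card_fun, Fintype.card_fin]
      ring
    have hspanle : Submodule.span K (Set.range (fun x : ((Fin a' → Fin (t + 1))
        × (Fin b' → Fin (t + 1)) × Fin (t + 1)) => (monomial (μP x) (1 : K) :
          MvPolynomial (Fin (a' + 1) ⊕ Fin (b' + 1)) K))) ≤ T d := by
      rw [Submodule.span_le]
      rintro _ ⟨x, rfl⟩
      exact hmemT x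
    calc (t + 1) ^ (a' + b' + 1)
        = Fintype.card ((Fin a' → Fin (t + 1)) × (Fin b' → Fin (t + 1)) × Fin (t + 1)) :=
          hcard.symm
      _ = finrank K (Submodule.span K (Set.range (fun x : ((Fin a' → Fin (t + 1))
            × (Fin b' → Fin (t + 1)) × Fin (t + 1)) => (monomial (μP x) (1 : K) :
              MvPolynomial (Fin (a' + 1) ⊕ Fin (b' + 1)) K)))) :=
          (finrank_span_eq_card hLI).symm
      _ ≤ finrank K (T d) := Submodule.finrank_mono hspanle
  have hup : finrank K (T d) ≤ (d + 1) ^ m * D ^ (a' + b' + 2) := by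
    have hle := finrank_range_le_card (R := K) (F d)
    have hcard : Fintype.card ((Fin m → Fin (d + 1))
        × ((Fin (a' + 1) ⊕ Fin (b' + 1)) → Fin D)) = (d + 1) ^ m * D ^ (a' + b' + 2) := by
      simp only [Fintype.card_prod, Fintype.card_fun, Fintype.card_fin, Fintype.card_sum]
      congr 2
      omega
    rw [hTdef]
    exact le_trans hle (le_of_eq hcard)
  have harith : (d + 1) ^ m * D ^ (a' + b' + 2) < (t + 1) ^ (a' + b' + 1) := by
    have h0 : d + 1 ≤ (a' + b' + 1) * (t + 1) := by
      have he : (a' + b' + 1) * (t + 1) = (a' + b' + 1) * t + (a' + b' + 1) := by ring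
      rw [hddef] at *
      omega
    calc (d + 1) ^ m * D ^ (a' + b' + 2)
        ≤ ((a' + b' + 1) * (t + 1)) ^ m * D ^ (a' + b' + 2) :=
          mul_le_mul_left (Nat.pow_le_pow_left h0 m) _
      _ = (a' + b' + 1) ^ m * (t + 1) ^ m * D ^ (a' + b' + 2) := by rw [mul_pow]
      _ ≤ (a' + b' + 1) ^ (a' + b') * (t + 1) ^ (a' + b') * D ^ (a' + b' + 2) := by
          have e1 : (a' + b' + 1) ^ m ≤ (a' + b' + 1) ^ (a' + b') :=
            Nat.pow_le_pow_right (by omega) hm2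
          have e2 : (t + 1) ^ m ≤ (t + 1) ^ (a' + b') :=
            Nat.pow_le_pow_right (by omega) hm2
          exact mul_le_mul_left (Nat.mul_le_mul e1 e2) _
      _ = t * (t + 1) ^ (a' + b') := by
          rw [htdef]
          ring
      _ < (t + 1) * (t + 1) ^ (a' + b') :=
          mul_lt_mul_of_pos_right (by omega) (by positivity)
      _ = (t + 1) ^ (a' + b' + 1) := by
          rw [pow_succ]
          ring
  exact absurd (lt_of_le_of_lt (le_trans hlow hup) harith) (lt_irrefl _)
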